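/- Let d, n ≥ 1, let U ⊆ ℝ^d be a bounded Borel set, and let p ∈ ℝ^d. Let a be a measurable map assigning to each x = (x₁,…,x_n) ∈ (ℝ^d)^n and each index i ∈ {1,…,n} a symmetric positive semidefinite d×d real matrix a(x,i), and assume the permutation covariance a(x∘σ, i) = a(x, σ(i)) for every permutation σ of {1,…,n}, every x and i, where (x∘σ)_j := x_{σ(j)}. Let f : (ℝ^d)^n → ℝ be continuously differentiable and let f̃ := (1/n!) ∑_{σ} f∘σ be its symmetrization, the sum ranging over all permutations σ of {1,…,n}. Then ∫_{U^n} ∑_{i=1}^{n} (p + ∇_{x_i} f̃(x)) · a(x,i) (p + ∇_{x_i} f̃(x)) dx ≤ ∫_{U^n} ∑_{i=1}^{n} (p + ∇_{x_i} f(x)) · a(x,i) (p + ∇_{x_i} f(x)) dx, where ∇_{x_i} denotes the gradient with respect to the i-th ℝ^d-variable and both integrals of the nonnegative integrands are understood as values in [0,∞]. -/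

import Mathlib

open MeasureTheory
open scoped ENNReal

/-- The partial gradient of `g : (ℝ^d)^n → ℝ` with respect to the `i`-th `ℝ^d`-variable,
`j`-th coordinate: the directional derivative of `g` in the direction of the unit vector
in the `(i,j)` slot. -/
noncomputable def partialGrad {d n : ℕ}
    (g : (Fin n → Fin d → ℝ) → ℝ) (x : Fin n → Fin d → ℝ) (i : Fin n) (j : Fin d) : ℝ :=
  fderiv ℝ g x (Pi.single i (Pi.single j 1))

/-- The symmetrization `f̃ = (1/n!) ∑_σ f ∘ σ` of `f : (ℝ^d)^n → ℝ` over the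
permutations of the `n` variables. -/
noncomputable def symmetrization {d n : ℕ}
    (f : (Fin n → Fin d → ℝ) → ℝ) (x : Fin n → Fin d → ℝ) : ℝ :=
  (1 / (Nat.factorial n : ℝ)) * ∑ σ : Equiv.Perm (Fin n), f (fun i => x (σ i))

/-- Jensen-type inequality for a positive semidefinite symmetric quadratic form:
the form evaluated at a sum is at most `card ι` times the sum of the evaluations. -/
lemma jensen_quad {d : ℕ} {ι : Type*} [Fintype ι] (A : Fin d → Fin d → ℝ)
    (hsym : ∀ j l, A j l = A l j)
    (hpsd : ∀ v : Fin d → ℝ, 0 ≤ ∑ j, ∑ l, v j * A j l * v l)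
    (w : ι → Fin d → ℝ) :
    (∑ j, ∑ l, (∑ σ, w σ j) * A j l * (∑ σ, w σ l))
      ≤ (Fintype.card ι : ℝ) * ∑ σ, ∑ j, ∑ l, w σ j * A j l * w σ l := by
  classical
  set B := Matrix.toBilin' (Matrix.of A) with hB
  have hBapp : ∀ u v : Fin d → ℝ, B u v = ∑ j, ∑ l, u j * A j l * v l := by
    intro u v; rw [hB, Matrix.toBilin'_apply]; rfl
  have hBsym : ∀ u v, B u v = B v u := by
    intro u v
    rw [hBapp, hBapp, Finset.sum_comm]
    exact Finset.sum_congr rfl fun j _ => Finset.sum_congr rfl fun l _ => by rw [hsym]; ring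
  have hBpos : ∀ v, 0 ≤ B v v := fun v => by rw [hBapp]; exact hpsd v
  have key : ∀ u v, 2 * B u v ≤ B u u + B v v := by
    intro u v
    have h := hBpos (u - v)
    have hexp : B (u - v) (u - v) = B u u - 2 * B u v + B v v := by
      simp only [map_sub, LinearMap.sub_apply]
      rw [hBsym v u]; ring
    rw [hexp] at h; linarith
  have h1 : (∑ j, ∑ l, (∑ σ, w σ j) * A j l * (∑ σ, w σ l)) = B (∑ σ, w σ) (∑ σ, w σ) := by
    rw [hBapp]; simp [Finset.sum_apply]
  have h2 : B (∑ σ, w σ) (∑ σ, w σ) = ∑ σ, ∑ τ, B (w σ) (w τ) := by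
    have hbs : B (∑ σ, w σ) = ∑ σ, B (w σ) := map_sum B w Finset.univ
    rw [hbs, LinearMap.sum_apply]
    exact Finset.sum_congr rfl fun σ _ => map_sum _ _ _
  have h3 : (∑ σ, ∑ τ, B (w σ) (w τ)) ≤ (Fintype.card ι : ℝ) * ∑ σ, B (w σ) (w σ) := by
    have h4 : (2:ℝ) * ∑ σ, ∑ τ, B (w σ) (w τ) ≤ 2 * ((Fintype.card ι : ℝ) * ∑ σ, B (w σ) (w σ)) := by
      calc (2:ℝ) * ∑ σ, ∑ τ, B (w σ) (w τ) = ∑ σ, ∑ τ, 2 * B (w σ) (w τ) := by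
            simp [Finset.mul_sum]
        _ ≤ ∑ σ, ∑ τ, (B (w σ) (w σ) + B (w τ) (w τ)) :=
            Finset.sum_le_sum fun σ _ => Finset.sum_le_sum fun τ _ => key _ _
        _ = 2 * ((Fintype.card ι : ℝ) * ∑ σ, B (w σ) (w σ)) := by
            simp only [Finset.sum_add_distrib, Finset.sum_const, Finset.card_univ, nsmul_eq_mul,
              ← Finset.mul_sum]
            ring
    linarith
  rw [h1, h2]
  calc (∑ σ, ∑ τ, B (w σ) (w τ)) ≤ (Fintype.card ι : ℝ) * ∑ σ, B (w σ) (w σ) := h3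
    _ = (Fintype.card ι : ℝ) * ∑ σ, ∑ j, ∑ l, w σ j * A j l * w σ l := by
        congr 1; exact Finset.sum_congr rfl fun σ _ => hBapp _ _

/-- The continuous linear map permuting the variables of `(ℝ^d)^n`. -/
noncomputable def permCLM (d n : ℕ) (σ : Equiv.Perm (Fin n)) :
    (Fin n → Fin d → ℝ) →L[ℝ] (Fin n → Fin d → ℝ) :=
  ContinuousLinearMap.pi fun i => ContinuousLinearMap.proj (σ i)

lemma permCLM_apply {d n : ℕ} (σ : Equiv.Perm (Fin n)) (x : Fin n → Fin d → ℝ) :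
    permCLM d n σ x = fun i => x (σ i) := rfl

lemma permCLM_single {d n : ℕ} (σ : Equiv.Perm (Fin n)) (i : Fin n) (v : Fin d → ℝ) :
    permCLM d n σ (Pi.single i v) = Pi.single (σ⁻¹ i) v := by
  funext m
  simp [permCLM_apply, Pi.single_apply, Equiv.apply_eq_iff_eq_symm_apply, Equiv.Perm.inv_def]

lemma partialGrad_comp_perm {d n : ℕ} (f : (Fin n → Fin d → ℝ) → ℝ) (hf : ContDiff ℝ 1 f)
    (σ : Equiv.Perm (Fin n)) (x : Fin n → Fin d → ℝ) (i : Fin n) (j : Fin d) :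
    partialGrad (fun y => f (fun m => y (σ m))) x i j
      = partialGrad f (fun m => x (σ m)) (σ⁻¹ i) j := by
  have h1 : (fun y : Fin n → Fin d → ℝ => f (fun m => y (σ m))) = f ∘ (permCLM d n σ) := rfl
  rw [partialGrad, h1,
    fderiv_comp x ((hf.differentiable one_ne_zero) _) (permCLM d n σ).differentiableAt,
    (permCLM d n σ).fderiv]
  rw [ContinuousLinearMap.coe_comp', Function.comp_apply, permCLM_single]
  rfl

lemma partialGrad_symmetrization {d n : ℕ} (f : (Fin n → Fin d → ℝ) → ℝ)
    (hf : ContDiff ℝ 1 f) (x : Fin n → Fin d → ℝ) (i : Fin n) (j : Fin d) :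
    partialGrad (symmetrization f) x i j
      = (1 / (Nat.factorial n : ℝ)) *
          ∑ σ : Equiv.Perm (Fin n), partialGrad f (fun m => x (σ m)) (σ⁻¹ i) j := by
  have hdiff : ∀ σ : Equiv.Perm (Fin n),
      DifferentiableAt ℝ (fun y : Fin n → Fin d → ℝ => f (fun m => y (σ m))) x := fun σ =>
    ((hf.differentiable one_ne_zero) _).comp x (permCLM d n σ).differentiableAt
  have hsum : DifferentiableAt ℝ
      (fun y : Fin n → Fin d → ℝ => ∑ σ : Equiv.Perm (Fin n), f (fun m => y (σ m))) x :=
    DifferentiableAt.fun_sum fun σ _ => hdiff σ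
  unfold symmetrization partialGrad
  rw [fderiv_const_mul hsum, fderiv_fun_sum fun σ _ => hdiff σ]
  rw [ContinuousLinearMap.smul_apply, ContinuousLinearMap.sum_apply, smul_eq_mul]
  congr 1
  exact Finset.sum_congr rfl fun σ _ => partialGrad_comp_perm f hf σ x i j

/-- for a permutation-covariant measurable family of symmetric positive
semidefinite matrices `a(x,i)` and a `C¹` function `f`, the Dirichlet energy of the
symmetrization `f̃` is at most the Dirichlet energy of `f`:
`∫_{U^n} ∑_i (p + ∇_{x_i} f̃)·a(x,i)(p + ∇_{x_i} f̃) dx ≤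
 ∫_{U^n} ∑_i (p + ∇_{x_i} f)·a(x,i)(p + ∇_{x_i} f) dx`. -/
theorem symmetrization_decreases_energy
    {d n : ℕ} (hd : 1 ≤ d) (hn : 1 ≤ n)
    (U : Set (Fin d → ℝ)) (hU : MeasurableSet U) (hUb : Bornology.IsBounded U)
    (p : Fin d → ℝ)
    (a : (Fin n → Fin d → ℝ) → Fin n → Fin d → Fin d → ℝ)
    (ha : Measurable a)
    (hsymm : ∀ x i j l, a x i j l = a x i l j)
    (hpsd : ∀ x i (v : Fin d → ℝ), 0 ≤ ∑ j, ∑ l, v j * a x i j l * v l)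
    (hcov : ∀ (σ : Equiv.Perm (Fin n)) (x : Fin n → Fin d → ℝ) (i : Fin n),
      a (fun m => x (σ m)) i = a x (σ i))
    (f : (Fin n → Fin d → ℝ) → ℝ) (hf : ContDiff ℝ 1 f) :
    (∫⁻ x in {y : Fin n → Fin d → ℝ | ∀ i, y i ∈ U},
        ENNReal.ofReal (∑ i, ∑ j, ∑ l,
          (p j + partialGrad (symmetrization f) x i j) * a x i j l *
            (p l + partialGrad (symmetrization f) x i l))) ≤
      ∫⁻ x in {y : Fin n → Fin d → ℝ | ∀ i, y i ∈ U},
        ENNReal.ofReal (∑ i, ∑ j, ∑ l,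
          (p j + partialGrad f x i j) * a x i j l *
            (p l + partialGrad f x i l)) := by
  classical
  set S : Set (Fin n → Fin d → ℝ) := {y | ∀ i, y i ∈ U} with hS
  set c : ℝ := 1 / (Nat.factorial n : ℝ) with hc
  have hnfac : (0:ℝ) < (Nat.factorial n : ℝ) := by
    exact_mod_cast n.factorial_pos
  have hcpos : 0 < c := by rw [hc]; positivity
  have h1 : c * (Nat.factorial n : ℝ) = 1 := by
    rw [hc]; field_simp
  set w : (Fin n → Fin d → ℝ) → Equiv.Perm (Fin n) → Fin n → Fin d → ℝ :=
    fun x σ i j => p j + partialGrad f (fun m => x (σ m)) (σ⁻¹ i) j with hw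
  set Q : Equiv.Perm (Fin n) → (Fin n → Fin d → ℝ) → ℝ :=
    fun σ x => ∑ i, ∑ j, ∑ l, w x σ i j * a x i j l * w x σ i l with hQ
  have hQnonneg : ∀ σ x, 0 ≤ Q σ x := fun σ x =>
    Finset.sum_nonneg fun i _ => hpsd x i _
  -- representation of the symmetrized gradient
  have hrepr : ∀ x i j, p j + partialGrad (symmetrization f) x i j
      = c * ∑ σ : Equiv.Perm (Fin n), w x σ i j := by
    intro x i j
    rw [partialGrad_symmetrization f hf, ← hc]
    simp only [hw]
    have hsplit : ∑ σ : Equiv.Perm (Fin n),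
        (p j + partialGrad f (fun m => x (σ m)) (σ⁻¹ i) j)
        = (Nat.factorial n : ℝ) * p j
          + ∑ σ : Equiv.Perm (Fin n), partialGrad f (fun m => x (σ m)) (σ⁻¹ i) j := by
      rw [Finset.sum_add_distrib, Finset.sum_const, Finset.card_univ, Fintype.card_perm,
        Fintype.card_fin, nsmul_eq_mul]
    rw [hsplit, mul_add, ← mul_assoc, h1, one_mul]
  -- pointwise Jensen inequality
  have hpoint : ∀ x, (∑ i, ∑ j, ∑ l,
        (p j + partialGrad (symmetrization f) x i j) * a x i j l *
          (p l + partialGrad (symmetrization f) x i l))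
      ≤ c * ∑ σ : Equiv.Perm (Fin n), Q σ x := by
    intro x
    have hcc : c ^ 2 * (Fintype.card (Equiv.Perm (Fin n)) : ℝ) = c := by
      rw [Fintype.card_perm, Fintype.card_fin, pow_two, mul_assoc, h1, mul_one]
    have hi : ∀ i, (∑ j, ∑ l,
          (p j + partialGrad (symmetrization f) x i j) * a x i j l *
            (p l + partialGrad (symmetrization f) x i l))
        ≤ c * ∑ σ : Equiv.Perm (Fin n), ∑ j, ∑ l, w x σ i j * a x i j l * w x σ i l := by
      intro i
      have hJ := jensen_quad (a x i) (hsymm x i) (hpsd x i)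
        (fun σ : Equiv.Perm (Fin n) => w x σ i)
      have lhs_eq : (∑ j, ∑ l,
            (p j + partialGrad (symmetrization f) x i j) * a x i j l *
              (p l + partialGrad (symmetrization f) x i l))
          = c ^ 2 * ∑ j, ∑ l, (∑ σ : Equiv.Perm (Fin n), w x σ i j) * a x i j l *
              (∑ σ : Equiv.Perm (Fin n), w x σ i l) := by
        rw [Finset.mul_sum]
        refine Finset.sum_congr rfl fun j _ => ?_
        rw [Finset.mul_sum]
        refine Finset.sum_congr rfl fun l _ => ?_
        rw [hrepr x i j, hrepr x i l]; ring
      rw [lhs_eq]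
      calc c ^ 2 * ∑ j, ∑ l, (∑ σ : Equiv.Perm (Fin n), w x σ i j) * a x i j l *
              (∑ σ : Equiv.Perm (Fin n), w x σ i l)
          ≤ c ^ 2 * ((Fintype.card (Equiv.Perm (Fin n)) : ℝ) *
              ∑ σ : Equiv.Perm (Fin n), ∑ j, ∑ l, w x σ i j * a x i j l * w x σ i l) :=
            mul_le_mul_of_nonneg_left hJ (by positivity)
        _ = c * ∑ σ : Equiv.Perm (Fin n), ∑ j, ∑ l, w x σ i j * a x i j l * w x σ i l := by
            rw [← mul_assoc, hcc]
    calc (∑ i, ∑ j, ∑ l,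
            (p j + partialGrad (symmetrization f) x i j) * a x i j l *
              (p l + partialGrad (symmetrization f) x i l))
        ≤ ∑ i, c * ∑ σ : Equiv.Perm (Fin n), ∑ j, ∑ l, w x σ i j * a x i j l * w x σ i l :=
          Finset.sum_le_sum fun i _ => hi i
      _ = c * ∑ σ : Equiv.Perm (Fin n), Q σ x := by
          rw [← Finset.mul_sum, Finset.sum_comm]
  -- measurability
  have hmeas_a : ∀ i j l, Measurable fun x => a x i j l := fun i j l => ha.eval.eval.eval
  have hmeas_pg : ∀ (σ : Equiv.Perm (Fin n)) (k : Fin n) (j : Fin d),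
      Measurable fun x : Fin n → Fin d → ℝ => partialGrad f (fun m => x (σ m)) k j := by
    intro σ k j
    have h1 : Continuous fun y : Fin n → Fin d → ℝ =>
        fderiv ℝ f y (Pi.single k (Pi.single j 1)) :=
      (hf.continuous_fderiv one_ne_zero).clm_apply continuous_const
    exact (h1.comp (permCLM d n σ).continuous).measurable
  have hmeasQ : ∀ σ, Measurable fun x => Q σ x := by
    intro σ
    simp only [hQ, hw]
    refine Finset.measurable_sum _ fun i _ => Finset.measurable_sum _ fun j _ =>
      Finset.measurable_sum _ fun l _ => ?_
    exact ((measurable_const.add (hmeas_pg σ (σ⁻¹ i) j)).mul (hmeas_a i j l)).mul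
      (measurable_const.add (hmeas_pg σ (σ⁻¹ i) l))
  -- change of variables
  have hCOV : ∀ σ : Equiv.Perm (Fin n),
      (∫⁻ x in S, ENNReal.ofReal (Q σ x))
        = ∫⁻ y in S, ENNReal.ofReal (∑ i, ∑ j, ∑ l,
            (p j + partialGrad f y i j) * a y i j l * (p l + partialGrad f y i l)) := by
    intro σ
    set F : (Fin n → Fin d → ℝ) → ℝ≥0∞ := fun y => ENNReal.ofReal (∑ i, ∑ j, ∑ l,
      (p j + partialGrad f y i j) * a y i j l * (p l + partialGrad f y i l)) with hF
    have hQF : ∀ x, ENNReal.ofReal (Q σ x) = F (fun m => x (σ m)) := by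
      intro x
      rw [hF]
      congr 1
      have hax : ∀ i : Fin n, a x i = a (fun m => x (σ m)) (σ⁻¹ i) := by
        intro i
        have h := hcov σ x (σ⁻¹ i)
        rw [show σ (σ⁻¹ i) = i from σ.apply_symm_apply i] at h
        exact h.symm
      simp only [hQ, hw]
      calc ∑ i, ∑ j, ∑ l, (p j + partialGrad f (fun m => x (σ m)) (σ⁻¹ i) j) * a x i j l *
              (p l + partialGrad f (fun m => x (σ m)) (σ⁻¹ i) l)
          = ∑ i, ∑ j, ∑ l, (p j + partialGrad f (fun m => x (σ m)) (σ⁻¹ i) j) *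
              a (fun m => x (σ m)) (σ⁻¹ i) j l *
              (p l + partialGrad f (fun m => x (σ m)) (σ⁻¹ i) l) := by
            refine Finset.sum_congr rfl fun i _ => ?_
            rw [← hax i]
        _ = ∑ i, ∑ j, ∑ l, (p j + partialGrad f (fun m => x (σ m)) i j) *
              a (fun m => x (σ m)) i j l *
              (p l + partialGrad f (fun m => x (σ m)) i l) :=
            Equiv.sum_comp (σ⁻¹ : Equiv.Perm (Fin n)) (fun i => ∑ j, ∑ l,
              (p j + partialGrad f (fun m => x (σ m)) i j) * a (fun m => x (σ m)) i j l *
              (p l + partialGrad f (fun m => x (σ m)) i l))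
    set e := MeasurableEquiv.piCongrLeft (fun _ : Fin n => (Fin d → ℝ)) σ.symm with he
    have heapp : ∀ x : Fin n → Fin d → ℝ, e x = fun m => x (σ m) := by
      intro x; funext i
      simp [he, MeasurableEquiv.piCongrLeft, Equiv.piCongrLeft_apply_apply, Equiv.piCongrLeft_apply_eq_cast]
    have hmp : MeasurePreserving e volume volume :=
      volume_measurePreserving_piCongrLeft _ _
    have hpreE : e ⁻¹' S = S := by
      ext x
      simp only [Set.mem_preimage, hS, Set.mem_setOf_eq, heapp]
      constructor
      · intro h i
        have := h (σ⁻¹ i)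
        simpa using this
      · intro h i
        exact h (σ i)
    calc (∫⁻ x in S, ENNReal.ofReal (Q σ x)) = ∫⁻ x in e ⁻¹' S, F (e x) := by
          rw [hpreE]
          exact lintegral_congr fun x => by rw [hQF x, heapp x]
      _ = ∫⁻ y in S, F y := hmp.setLIntegral_comp_preimage_emb e.measurableEmbedding F S
  -- main chain
  calc (∫⁻ x in S, ENNReal.ofReal (∑ i, ∑ j, ∑ l,
          (p j + partialGrad (symmetrization f) x i j) * a x i j l *
            (p l + partialGrad (symmetrization f) x i l)))
      ≤ ∫⁻ x in S, ENNReal.ofReal (c * ∑ σ : Equiv.Perm (Fin n), Q σ x) :=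
        lintegral_mono fun x => ENNReal.ofReal_le_ofReal (hpoint x)
    _ = ∫⁻ x in S, ENNReal.ofReal c * ∑ σ : Equiv.Perm (Fin n), ENNReal.ofReal (Q σ x) := by
        refine lintegral_congr fun x => ?_
        rw [ENNReal.ofReal_mul hcpos.le, ENNReal.ofReal_sum_of_nonneg fun σ _ => hQnonneg σ x]
    _ = ENNReal.ofReal c * ∑ σ : Equiv.Perm (Fin n), ∫⁻ x in S, ENNReal.ofReal (Q σ x) := by
        rw [lintegral_const_mul' _ _ ENNReal.ofReal_ne_top,
          lintegral_finset_sum' _ fun σ _ => ((hmeasQ σ).ennreal_ofReal).aemeasurable]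
    _ = ENNReal.ofReal c * ∑ σ : Equiv.Perm (Fin n), ∫⁻ y in S, ENNReal.ofReal (∑ i, ∑ j, ∑ l,
          (p j + partialGrad f y i j) * a y i j l * (p l + partialGrad f y i l)) := by
        congr 1
        exact Finset.sum_congr rfl fun σ _ => hCOV σ
    _ = ∫⁻ x in S, ENNReal.ofReal (∑ i, ∑ j, ∑ l,
          (p j + partialGrad f x i j) * a x i j l * (p l + partialGrad f x i l)) := by
        rw [Finset.sum_const, Finset.card_univ, Fintype.card_perm, Fintype.card_fin,
          nsmul_eq_mul, ← mul_assoc]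
        have hone : ENNReal.ofReal c * (Nat.factorial n : ℝ≥0∞) = 1 := by
          rw [← ENNReal.ofReal_natCast, ← ENNReal.ofReal_mul hcpos.le, h1, ENNReal.ofReal_one]
        rw [hone, one_mul]
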